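/- arXiv:2507.22786 — 2 statements merged into one kernel-verified Lean document; each statement's English description precedes it below -/
import Mathlib

section
/- Let H be a Hermitian matrix indexed by Fin dV × Fin dL. Then exp(H) is block diagonal with respect to the first factor if and only if H is block diagonal with respect to the first factor. (Hence a Hamiltonian-based model ρ(θ) = exp(H(θ))/Tr(exp H(θ)) is a CQ-LVM if and only if its Hamiltonian is a direct sum H = ⊕_i H_i of Hermitian operators on ℂ^{dL}.) -/
open Matrix
open scoped Kronecker ComplexOrder

noncomputable section

/-- The partial trace over the second tensor factor. -/
def ptrace {dA dB : ℕ} (ρ : Matrix (Fin dA × Fin dB) (Fin dA × Fin dB) ℂ) :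
    Matrix (Fin dA) (Fin dA) ℂ :=
  Matrix.of fun a a' => ∑ b : Fin dB, ρ (a, b) (a', b)

/-- Matrix logarithm of a Hermitian matrix, applying the real logarithm to the
eigenvalues in a spectral decomposition (junk value `0` for non-Hermitian input). -/
def mlog {n : Type*} [Fintype n] [DecidableEq n] (A : Matrix n n ℂ) : Matrix n n ℂ :=
  if h : A.IsHermitian then h.cfc Real.log else 0

open Classical in
/-- The positive semidefinite square root (junk value `0` otherwise). -/
def msqrt {n : Type*} [Fintype n] [DecidableEq n] (A : Matrix n n ℂ) : Matrix n n ℂ :=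
  if h : A.PosSemidef then
    (h.1.eigenvectorUnitary : Matrix n n ℂ) *
      diagonal ((↑) ∘ (√·) ∘ h.1.eigenvalues) * (star h.1.eigenvectorUnitary : Matrix n n ℂ)
  else 0

/-- A density matrix: Hermitian positive semidefinite with trace one. -/
def IsDensityMatrix {n : Type*} [Fintype n] [DecidableEq n] (A : Matrix n n ℂ) : Prop :=
  A.PosSemidef ∧ A.trace = 1

/-- The von Neumann entropy `S(A) = -Tr(A log A)`. -/
def vnEntropy {n : Type*} [Fintype n] [DecidableEq n] (A : Matrix n n ℂ) : ℂ :=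
  -(A * mlog A).trace

/-- The Umegaki relative entropy `D(ω‖ρ) = Tr(ω log ω) - Tr(ω log ρ)`. -/
def relEnt {n : Type*} [Fintype n] [DecidableEq n] (ω ρ : Matrix n n ℂ) : ℂ :=
  (ω * mlog ω).trace - (ω * mlog ρ).trace

/-- The Petz recovery map for the partial trace:
`R_ρ(ω) = ρ^{1/2} ((ρ_A^{-1/2} ω ρ_A^{-1/2}) ⊗ I_B) ρ^{1/2}`. -/
def petz {dA dB : ℕ} (ρ : Matrix (Fin dA × Fin dB) (Fin dA × Fin dB) ℂ)
    (ω : Matrix (Fin dA) (Fin dA) ℂ) : Matrix (Fin dA × Fin dB) (Fin dA × Fin dB) ℂ :=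
  msqrt ρ * (((msqrt (ptrace ρ))⁻¹ * ω * (msqrt (ptrace ρ))⁻¹) ⊗ₖ
    (1 : Matrix (Fin dB) (Fin dB) ℂ)) * msqrt ρ

/-- Condition S: `ρ` is positive definite and separable of the form
`ρ = ∑ i, α i • (x i x i† ⊗ ρ_B i)` for an orthonormal basis `x` of `ℂ^{dA}`, `α i > 0`,
density matrices `ρ_B i`, and `ω` commutes with `Tr_B ρ`. -/
def CondS {dA dB : ℕ} (ω : Matrix (Fin dA) (Fin dA) ℂ)
    (ρ : Matrix (Fin dA × Fin dB) (Fin dA × Fin dB) ℂ) : Prop :=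
  ρ.PosDef ∧
  (∃ (x : Fin dA → (Fin dA → ℂ)) (α : Fin dA → ℝ) (σ : Fin dA → Matrix (Fin dB) (Fin dB) ℂ),
    (∀ i j, star (x i) ⬝ᵥ x j = if i = j then 1 else 0) ∧
    (∀ i, 0 < α i) ∧ (∀ i, IsDensityMatrix (σ i)) ∧
    ρ = ∑ i, (α i : ℂ) • (Matrix.vecMulVec (x i) (star (x i)) ⊗ₖ σ i)) ∧
  ω * ptrace ρ = ptrace ρ * ω

/-- A matrix on a product index type is block diagonal with respect to the first factor. -/
def BlockDiagFst {α β : Type*} (M : Matrix (α × β) (α × β) ℂ) : Prop :=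
  ∀ u a v b, u ≠ v → M (u, a) (v, b) = 0

/-- The `i`-th diagonal block of a matrix on a product index type. -/
def blockFst {α β : Type*} (M : Matrix (α × β) (α × β) ℂ) (i : α) : Matrix β β ℂ :=
  Matrix.of fun k l => M (i, k) (i, l)

lemma commute_diagonal_iff' {n : Type*} [Fintype n] [DecidableEq n] (d : n → ℂ)
    (C : Matrix n n ℂ) :
    Commute (diagonal d) C ↔ ∀ s t, d s ≠ d t → C s t = 0 := by
  constructor
  · intro h s t hst
    have h1 : (diagonal d * C) s t = (C * diagonal d) s t := by rw [h.eq]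
    rw [Matrix.diagonal_mul, Matrix.mul_diagonal] at h1
    have h2 : (d s - d t) * C s t = 0 := by
      rw [sub_mul, h1, mul_comm, sub_self]
    rcases mul_eq_zero.mp h2 with h3 | h3
    · exact absurd (sub_eq_zero.mp h3) hst
    · exact h3
  · intro h
    unfold Commute SemiconjBy
    ext s t
    rw [Matrix.diagonal_mul, Matrix.mul_diagonal]
    by_cases hdt : d s = d t
    · rw [hdt, mul_comm]
    · rw [h s t hdt, mul_zero, zero_mul]

lemma commute_exp_iff {n : Type*} [Fintype n] [DecidableEq n]
    (H : Matrix n n ℂ) (hH : H.IsHermitian) (B : Matrix n n ℂ) :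
    Commute (NormedSpace.exp H) B ↔ Commute H B := by
  set U : Matrix n n ℂ := (hH.eigenvectorUnitary : Matrix n n ℂ) with hUdef
  have hU1 : U * star U = 1 := (Matrix.mem_unitaryGroup_iff).mp hH.eigenvectorUnitary.2
  have hU2 : star U * U = 1 := (Matrix.mem_unitaryGroup_iff').mp hH.eigenvectorUnitary.2
  have hUunit : IsUnit U := ⟨⟨U, star U, hU1, hU2⟩, rfl⟩
  have hUinv : U⁻¹ = star U := Matrix.inv_eq_right_inv hU1
  set d : n → ℂ := RCLike.ofReal ∘ hH.eigenvalues with hd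
  have hspec : H = U * diagonal d * U⁻¹ := by
    rw [hUinv]; exact hH.spectral_theorem
  have hexp : NormedSpace.exp H = U * diagonal (fun s => Complex.exp (d s)) * U⁻¹ := by
    rw [hspec, Matrix.exp_conj U _ hUunit, Matrix.exp_diagonal]
    rw [Pi.exp_def]
    congr 1
    funext s
    rw [← Complex.exp_eq_exp_ℂ]
  have cancel1 : ∀ X : Matrix n n ℂ, star U * (U * X) = X := by
    intro X; rw [← Matrix.mul_assoc, hU2, Matrix.one_mul]
  have cancel2 : ∀ X : Matrix n n ℂ, X * star U * U = X := by
    intro X; rw [Matrix.mul_assoc, hU2, Matrix.mul_one]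
  have conj_iff : ∀ A : Matrix n n ℂ,
      Commute (U * A * U⁻¹) B ↔ Commute A (star U * B * U) := by
    intro A
    rw [hUinv]
    unfold Commute SemiconjBy
    constructor
    · intro h
      calc A * (star U * B * U) = star U * (U * (A * (star U * B * U))) := (cancel1 _).symm
        _ = star U * (U * A * star U * B) * U := by
            simp only [Matrix.mul_assoc]
        _ = star U * (B * (U * A * star U)) * U := by rw [h]
        _ = star U * B * U * A * (star U * U) := by simp only [Matrix.mul_assoc]
        _ = star U * B * U * A := by rw [hU2, Matrix.mul_one]
    · intro h
      calc U * A * star U * B = U * (A * (star U * B * U)) * star U := by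
            simp only [Matrix.mul_assoc, hU1, Matrix.mul_one]
        _ = U * (star U * B * U * A) * star U := by rw [h]
        _ = (U * star U) * B * (U * A * star U) := by simp only [Matrix.mul_assoc]
        _ = B * (U * A * star U) := by rw [hU1, Matrix.one_mul]
  rw [hexp, conj_iff, hspec, conj_iff, commute_diagonal_iff', commute_diagonal_iff']
  have key : ∀ s t, Complex.exp (d s) = Complex.exp (d t) ↔ d s = d t := by
    intro s t
    have hds : d s = ((hH.eigenvalues s : ℝ) : ℂ) := rfl
    have hdt : d t = ((hH.eigenvalues t : ℝ) : ℂ) := rfl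
    rw [hds, hdt, ← Complex.ofReal_exp, ← Complex.ofReal_exp,
      Complex.ofReal_inj, Complex.ofReal_inj, Real.exp_eq_exp]
  constructor
  · intro h s t hst
    exact h s t (fun he => hst ((key s t).mp he))
  · intro h s t hst
    exact h s t (fun he => hst (by rw [he]))

/-- A Hamiltonian-based model is a CQ-LVM iff its Hamiltonian is a
direct sum: `exp H` is block diagonal iff `H` is block diagonal. -/
theorem exp_blockDiag_iff {dV dL : ℕ}
    (H : Matrix (Fin dV × Fin dL) (Fin dV × Fin dL) ℂ) (hH : H.IsHermitian) :
    BlockDiagFst (NormedSpace.exp H) ↔ BlockDiagFst H := by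
  unfold BlockDiagFst
  set d0 : Fin dV × Fin dL → ℂ := fun p => ((p.1 : ℕ) : ℂ) with hd0
  have hblock : ∀ M : Matrix (Fin dV × Fin dL) (Fin dV × Fin dL) ℂ,
      (∀ (u : Fin dV) (a : Fin dL) (v : Fin dV) (b : Fin dL), u ≠ v → M (u, a) (v, b) = 0)
        ↔ Commute (Matrix.diagonal d0) M := by
    intro M
    rw [commute_diagonal_iff']
    constructor
    · rintro h ⟨u, a⟩ ⟨v, b⟩ hne
      refine h u a v b (fun huv => hne ?_)
      simp [hd0, huv]
    · intro h u a v b huv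
      refine h (u, a) (v, b) (fun hc => huv ?_)
      exact Fin.val_injective (Nat.cast_injective hc)
  rw [hblock, hblock]
  constructor
  · intro h
    exact ((commute_exp_iff H hH (Matrix.diagonal d0)).mp h.symm).symm
  · intro h
    exact ((commute_exp_iff H hH (Matrix.diagonal d0)).mpr h.symm).symm
end
end

section
/- Let ρ be a positive definite density matrix on ℂ^{dV}⊗ℂ^{dL} that is block diagonal with respect to the first factor, with blocks ρ_L(i) and P(i) = Tr(ρ_L(i)), and let η_V be a positive definite diagonal density matrix on ℂ^{dV} with diagonal entries q_i. Then the Petz recovery map output R_ρ(η_V) is block diagonal with respect to the first factor, with i-th block equal to (q_i / P(i))·ρ_L(i); i.e. R_ρ(η_V) = ⊕_i q_i · (ρ_L(i)/P(i)), the conditional blocks of ρ reweighted by the target distribution. -/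
open Matrix
open scoped Kronecker ComplexOrder

noncomputable section

namespace Matrix.PosSemidef

open scoped MatrixOrder

/-- The positive semidefinite square root, via the continuous functional calculus. -/
def sqrt {n : Type*} [Fintype n] [DecidableEq n] {A : Matrix n n ℂ} (_h : A.PosSemidef) :
    Matrix n n ℂ :=
  CFC.sqrt A

lemma posSemidef_sqrt {n : Type*} [Fintype n] [DecidableEq n] {A : Matrix n n ℂ}
    (h : A.PosSemidef) : h.sqrt.PosSemidef :=
  (CFC.sqrt_nonneg A).posSemidef

lemma sqrt_mul_self {n : Type*} [Fintype n] [DecidableEq n] {A : Matrix n n ℂ}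
    (h : A.PosSemidef) : h.sqrt * h.sqrt = A :=
  CFC.sqrt_mul_sqrt_self A h.nonneg

lemma eq_sqrt_of_sq_eq {n : Type*} [Fintype n] [DecidableEq n] {A B : Matrix n n ℂ}
    (hB : B.PosSemidef) (hA : A.PosSemidef) (hsq : B ^ 2 = A) : B = hA.sqrt :=
  ((CFC.sqrt_eq_iff A B hA.nonneg hB.nonneg).2 (by rw [← sq]; exact hsq)).symm

end Matrix.PosSemidef

open scoped MatrixOrder in
lemma msqrt_eq_sqrt {n : Type*} [Fintype n] [DecidableEq n] {A : Matrix n n ℂ}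
    (h : A.PosSemidef) : msqrt A = h.sqrt := by
  rw [msqrt, dif_pos h, Matrix.PosSemidef.sqrt, CFC.sqrt_eq_cfc,
    cfc_nnreal_eq_real _ A h.nonneg, h.1.cfc_eq, Matrix.IsHermitian.cfc, Unitary.conjStarAlgAut_apply]
  congr! 3 with i
  funext i
  simp only [Function.comp_apply, Real.coe_sqrt, Real.coe_toNNReal _ (h.eigenvalues_nonneg i)]
  rfl

lemma posSemidef_blockDiagonal' {m o : Type*} [Fintype m] [DecidableEq m] [Fintype o]
    [DecidableEq o] {M : o → Matrix m m ℂ} (h : ∀ i, (M i).PosSemidef) :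
    (Matrix.blockDiagonal M).PosSemidef := by
  have key : Matrix.blockDiagonal M
      = (Matrix.blockDiagonal fun i => (h i).sqrt)ᴴ *
        (Matrix.blockDiagonal fun i => (h i).sqrt) := by
    rw [Matrix.blockDiagonal_conjTranspose, ← Matrix.blockDiagonal_mul]
    refine congrArg _ (funext fun i => ?_)
    rw [(h i).posSemidef_sqrt.1, (h i).sqrt_mul_self]
  rw [key]
  exact Matrix.posSemidef_conjTranspose_mul_self _

/-- For a block-diagonal model and a diagonal target, the Petz recovery map
returns the conditional blocks reweighted by the target distribution. -/
theorem petz_blockDiag {dV dL : ℕ}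
    (ρ : Matrix (Fin dV × Fin dL) (Fin dV × Fin dL) ℂ)
    (hρ : ρ.PosDef) (hρ1 : ρ.trace = 1) (hBD : BlockDiagFst ρ)
    (q : Fin dV → ℂ) (ηV : Matrix (Fin dV) (Fin dV) ℂ) (hηV : ηV = Matrix.diagonal q)
    (hηVpd : ηV.PosDef) (hηV1 : ηV.trace = 1) :
    BlockDiagFst (petz ρ ηV) ∧
    ∀ i : Fin dV, blockFst (petz ρ ηV) i
        = (q i / (blockFst ρ i).trace) • blockFst ρ i := by
  classical
  haveI hdL : Nonempty (Fin dL) := by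
    rcases Nat.eq_zero_or_pos dL with h0 | h
    · exfalso
      subst h0
      simp [Matrix.trace] at hρ1
    · exact ⟨⟨0, h⟩⟩
  set P : Fin dV → ℂ := fun i => (blockFst ρ i).trace with hPdef
  have hdiagpos : ∀ p : Fin dV × Fin dL, 0 < ρ p p := by
    intro p
    have h1 : (Pi.single p 1 : Fin dV × Fin dL → ℂ) ≠ 0 := by
      intro h
      have := congrFun h p
      simp at this
    exact hρ.diag_pos
  have hPpos : ∀ i, (0:ℂ) < P i := by
    intro i
    have htr : P i = ∑ k : Fin dL, ρ (i,k) (i,k) := by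
      simp [hPdef, Matrix.trace, Matrix.diag, blockFst]
    rw [htr]
    exact Finset.sum_pos (fun k _ => hdiagpos (i,k)) Finset.univ_nonempty
  have hPre : ∀ i, 0 < (P i).re ∧ (P i).im = 0 := by
    intro i
    have := hPpos i
    rw [Complex.lt_def] at this
    exact ⟨by simpa using this.1, by simpa using this.2.symm⟩
  set s : Fin dV → ℝ := fun i => Real.sqrt (P i).re with hsdef
  have hs2 : ∀ i, (s i : ℂ) * (s i : ℂ) = P i := by
    intro i
    have h1 : s i * s i = (P i).re := Real.mul_self_sqrt (hPre i).1.le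
    rw [← Complex.ofReal_mul, h1]
    exact Complex.ext rfl (by simp [(hPre i).2])
  have hsne : ∀ i, (s i : ℂ) ≠ 0 := by
    intro i
    simpa using (Real.sqrt_pos.mpr (hPre i).1).ne'
  have hPne : ∀ i, P i ≠ 0 := fun i => (hPpos i).ne'
  -- partial trace is diagonal
  have hptr : ptrace ρ = Matrix.diagonal P := by
    ext u v
    by_cases huv : u = v
    · subst huv
      simp [ptrace, Matrix.diagonal, hPdef, Matrix.trace, Matrix.diag, blockFst]
    · rw [ptrace, Matrix.of_apply, Matrix.diagonal_apply_ne _ huv]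
      exact Finset.sum_eq_zero fun b _ => hBD u b v b huv
  have hpsdV : (ptrace ρ).PosSemidef := by
    rw [hptr]
    exact Matrix.PosSemidef.diagonal fun i => (hPpos i).le
  have hsdiagpsd : (Matrix.diagonal fun i => (s i : ℂ)).PosSemidef :=
    Matrix.PosSemidef.diagonal fun i => Complex.zero_le_real.mpr (Real.sqrt_nonneg _)
  have hmsqV : msqrt (ptrace ρ) = Matrix.diagonal (fun i => (s i : ℂ)) := by
    rw [msqrt_eq_sqrt hpsdV]
    refine (hsdiagpsd.eq_sqrt_of_sq_eq hpsdV ?_).symm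
    rw [pow_two, Matrix.diagonal_mul_diagonal, hptr]
    exact congrArg _ (funext fun i => hs2 i)
  have hinv : (Matrix.diagonal fun i => (s i : ℂ))⁻¹
      = Matrix.diagonal fun i => (s i : ℂ)⁻¹ := by
    refine Matrix.inv_eq_right_inv ?_
    rw [Matrix.diagonal_mul_diagonal, ← Matrix.diagonal_one]
    exact congrArg _ (funext fun i => mul_inv_cancel₀ (hsne i))
  set c : Fin dV → ℂ := fun i => q i / P i with hcdef
  have hmid : (msqrt (ptrace ρ))⁻¹ * ηV * (msqrt (ptrace ρ))⁻¹ = Matrix.diagonal c := by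
    rw [hmsqV, hinv, hηV, Matrix.diagonal_mul_diagonal, Matrix.diagonal_mul_diagonal]
    refine congrArg _ (funext fun i => ?_)
    show (s i : ℂ)⁻¹ * q i * (s i : ℂ)⁻¹ = q i / P i
    rw [← hs2 i]
    field_simp
  -- blocks are PSD
  have hBpsd : ∀ i, (blockFst ρ i).PosSemidef := fun i =>
    hρ.posSemidef.submatrix (fun k : Fin dL => (i, k))
  -- the square root of ρ
  set T : Matrix (Fin dV × Fin dL) (Fin dV × Fin dL) ℂ :=
    (Matrix.blockDiagonal fun i => (hBpsd i).sqrt).submatrix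
      (Equiv.prodComm (Fin dV) (Fin dL)) (Equiv.prodComm (Fin dV) (Fin dL)) with hTdef
  have hTpsd : T.PosSemidef :=
    (posSemidef_blockDiagonal' fun i => (hBpsd i).posSemidef_sqrt).submatrix _
  have hT2 : T ^ 2 = ρ := by
    rw [pow_two, hTdef, Matrix.submatrix_mul_equiv, ← Matrix.blockDiagonal_mul]
    ext ⟨u, a⟩ ⟨v, b⟩
    by_cases huv : u = v
    · subst huv
      rw [Matrix.submatrix_apply]
      simp only [Equiv.prodComm_apply, Prod.swap_prod_mk, Matrix.blockDiagonal_apply_eq]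
      rw [(hBpsd u).sqrt_mul_self]
      rfl
    · rw [Matrix.submatrix_apply]
      simp only [Equiv.prodComm_apply, Prod.swap_prod_mk]
      rw [Matrix.blockDiagonal_apply_ne _ _ _ huv, hBD u a v b huv]
  have hS : msqrt ρ = T := by
    rw [msqrt_eq_sqrt hρ.posSemidef]
    exact (hTpsd.eq_sqrt_of_sq_eq hρ.posSemidef hT2).symm
  have hK : (Matrix.diagonal c) ⊗ₖ (1 : Matrix (Fin dL) (Fin dL) ℂ)
      = (Matrix.blockDiagonal fun i => c i • (1 : Matrix (Fin dL) (Fin dL) ℂ)).submatrix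
        (Equiv.prodComm (Fin dV) (Fin dL)) (Equiv.prodComm (Fin dV) (Fin dL)) := by
    ext ⟨u, a⟩ ⟨v, b⟩
    rw [Matrix.submatrix_apply]
    simp only [Equiv.prodComm_apply, Prod.swap_prod_mk, Matrix.kroneckerMap_apply]
    by_cases huv : u = v
    · subst huv
      simp [Matrix.blockDiagonal_apply_eq, Matrix.diagonal_apply_eq, smul_eq_mul]
    · rw [Matrix.diagonal_apply_ne _ huv, Matrix.blockDiagonal_apply_ne _ _ _ huv, zero_mul]
  have hpetz : petz ρ ηV
      = (Matrix.blockDiagonal fun i => c i • blockFst ρ i).submatrix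
        (Equiv.prodComm (Fin dV) (Fin dL)) (Equiv.prodComm (Fin dV) (Fin dL)) := by
    rw [petz, hmid, hS, hK, hTdef, Matrix.submatrix_mul_equiv, Matrix.submatrix_mul_equiv,
      ← Matrix.blockDiagonal_mul, ← Matrix.blockDiagonal_mul]
    refine congrArg (fun M => Matrix.submatrix M _ _) (congrArg _ (funext fun i => ?_))
    rw [mul_smul_comm, mul_one, smul_mul_assoc, (hBpsd i).sqrt_mul_self]
  constructor
  · intro u a v b huv
    rw [hpetz, Matrix.submatrix_apply]
    simp only [Equiv.prodComm_apply, Prod.swap_prod_mk]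
    exact Matrix.blockDiagonal_apply_ne _ _ _ huv
  · intro i
    ext k l
    rw [blockFst, Matrix.of_apply, hpetz, Matrix.submatrix_apply]
    simp only [Equiv.prodComm_apply, Prod.swap_prod_mk, Matrix.blockDiagonal_apply_eq]
    rfl
end
end
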